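/- arXiv:1905.11252 — 3 statements merged into one kernel-verified Lean document; each statement's English description precedes it below -/
import Mathlib

section
/- Let N be a power of two, τ ∈ [0, N) with integer part L = ⌊τ⌋ and fractional part λ = τ - L, and let s_{I1}, s_{I2}, k ∈ {0,...,N-1}. Define A_{k,i}(s) = sin(π(s - k - τ)⌈τ⌉_i/N)/sin(π(s - k - τ)/N) with ⌈τ⌉_1 = ⌈τ⌉, ⌈τ⌉_2 = N - ⌈τ⌉ (using the continuous extension at removable singularities). For any shift δ ∈ {0,...,N-1} with s_{I1} + δ < N and s_{I2} + δ < N, setting s'_{Ii} = s_{Ii} + δ and k' = [k + δ] mod N, one has (A'_{k,1})² = (A_{k,1})², (A'_{k,2})² = (A_{k,2})², and A'_{k,1}A'_{k,2} = A_{k,1}A_{k,2}, where A'_{k,i} is computed with s'_{Ii} and k' in place of s_{Ii} and k. -/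
open Real

/-- `sin (M x) / sin x` with its continuous extension `M cos (M x) / cos x`
at the removable singularities where `sin x = 0`. -/
noncomputable def sinRatio (M x : ℝ) : ℝ :=
  if Real.sin x = 0 then M * Real.cos (M * x) / Real.cos x else Real.sin (M * x) / Real.sin x

/-- Interference amplitude factor `sin (π (s - k - τ) c / N) / sin (π (s - k - τ) / N)`
(continuously extended), where `c` is `⌈τ⌉` or `N - ⌈τ⌉`. -/
noncomputable def Amp (N τ c s k : ℝ) : ℝ := sinRatio c (Real.pi * (s - k - τ) / N)

lemma sinRatio_add_pi (m : ℤ) (x : ℝ) :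
    sinRatio (m : ℝ) (x + Real.pi) = (-1 : ℝ) ^ m * -(sinRatio (m : ℝ) x) := by
  unfold sinRatio
  have h3 : (m : ℝ) * (x + Real.pi) = (m : ℝ) * x + (m : ℤ) * Real.pi := by push_cast; ring
  rw [Real.sin_add_pi, Real.cos_add_pi, h3, Real.cos_add_int_mul_pi, Real.sin_add_int_mul_pi]
  simp only [neg_eq_zero]
  set c : ℝ := (-1 : ℝ) ^ m with hc
  split_ifs with hs
  · ring
  · ring

theorem interference_amplitude_shift_invariance
    (SF N : ℕ) (hN : N = 2 ^ SF) (hSF : 1 ≤ SF)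
    (τ : ℝ) (hτ0 : 0 ≤ τ) (hτN : τ < N)
    (L : ℤ) (hL : L = ⌊τ⌋) (lam : ℝ) (hlam : lam = τ - L)
    (sI1 sI2 k : ℕ) (hs1 : sI1 < N) (hs2 : sI2 < N) (hk : k < N)
    (δ : ℕ) (hδ1 : sI1 + δ < N) (hδ2 : sI2 + δ < N)
    (k' : ℕ) (hk' : k' = (k + δ) % N) :
    (Amp N τ (⌈τ⌉ : ℝ) (sI1 + δ : ℕ) k') ^ 2 = (Amp N τ (⌈τ⌉ : ℝ) sI1 k) ^ 2 ∧
    (Amp N τ ((N : ℝ) - (⌈τ⌉ : ℝ)) (sI2 + δ : ℕ) k') ^ 2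
      = (Amp N τ ((N : ℝ) - (⌈τ⌉ : ℝ)) sI2 k) ^ 2 ∧
    Amp N τ (⌈τ⌉ : ℝ) (sI1 + δ : ℕ) k' * Amp N τ ((N : ℝ) - (⌈τ⌉ : ℝ)) (sI2 + δ : ℕ) k'
      = Amp N τ (⌈τ⌉ : ℝ) sI1 k * Amp N τ ((N : ℝ) - (⌈τ⌉ : ℝ)) sI2 k := by
  have hN0 : (N : ℝ) ≠ 0 := by rw [hN]; positivity
  have hcast2 : ((N : ℝ) - (⌈τ⌉ : ℝ)) = (((N : ℤ) - ⌈τ⌉ : ℤ) : ℝ) := by push_cast; ring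
  by_cases hcase : k + δ < N
  · -- no wrap: k' = k + δ, arguments identical
    have hk'' : k' = k + δ := by rw [hk', Nat.mod_eq_of_lt hcase]
    have e1 : Real.pi * (((sI1 + δ : ℕ) : ℝ) - (k' : ℝ) - τ) / N
        = Real.pi * ((sI1 : ℝ) - (k : ℝ) - τ) / N := by
      rw [hk'']; push_cast; ring_nf
    have e2 : Real.pi * (((sI2 + δ : ℕ) : ℝ) - (k' : ℝ) - τ) / N
        = Real.pi * ((sI2 : ℝ) - (k : ℝ) - τ) / N := by
      rw [hk'']; push_cast; ring_nf
    refine ⟨?_, ?_, ?_⟩ <;> simp only [Amp, e1, e2]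
  · -- wrap: k' = k + δ - N, argument shifts by π
    push_neg at hcase
    have hk'' : k' = k + δ - N := by
      have hlt : k + δ - N < N := by omega
      rw [hk', Nat.mod_eq_sub_mod hcase, Nat.mod_eq_of_lt hlt]
    have hc1 : ((k' : ℝ)) = (k : ℝ) + δ - N := by
      rw [hk'']; push_cast [Nat.cast_sub hcase]; ring
    have e1 : Real.pi * (((sI1 + δ : ℕ) : ℝ) - (k' : ℝ) - τ) / N
        = Real.pi * ((sI1 : ℝ) - (k : ℝ) - τ) / N + Real.pi := by
      rw [hc1]; push_cast; field_simp; ring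
    have e2 : Real.pi * (((sI2 + δ : ℕ) : ℝ) - (k' : ℝ) - τ) / N
        = Real.pi * ((sI2 : ℝ) - (k : ℝ) - τ) / N + Real.pi := by
      rw [hc1]; push_cast; field_simp; ring
    have A1 : Amp N τ (⌈τ⌉ : ℝ) (sI1 + δ : ℕ) k'
        = (-1 : ℝ) ^ (⌈τ⌉ : ℤ) * -(Amp N τ (⌈τ⌉ : ℝ) sI1 k) := by
      simp only [Amp, e1]
      exact sinRatio_add_pi _ _
    have A2 : Amp N τ ((N : ℝ) - (⌈τ⌉ : ℝ)) (sI2 + δ : ℕ) k'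
        = (-1 : ℝ) ^ ((N : ℤ) - ⌈τ⌉) * -(Amp N τ ((N : ℝ) - (⌈τ⌉ : ℝ)) sI2 k) := by
      simp only [Amp, e2, hcast2]
      exact sinRatio_add_pi _ _
    have hsq : ∀ m : ℤ, ((-1 : ℝ) ^ m) ^ 2 = 1 := by
      intro m
      rw [← zpow_natCast ((-1 : ℝ) ^ m) 2, ← zpow_mul]
      exact Even.neg_one_zpow ⟨m, by ring⟩
    have hNeven : Even ((N : ℤ)) := by
      have : Even N := by
        rw [hN]; exact (Nat.even_pow).mpr ⟨even_two, by omega⟩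
      exact (Int.even_coe_nat N).mpr this
    have hprodsign : (-1 : ℝ) ^ (⌈τ⌉ : ℤ) * (-1 : ℝ) ^ ((N : ℤ) - ⌈τ⌉) = 1 := by
      rw [← zpow_add₀ (by norm_num : (-1 : ℝ) ≠ 0)]
      apply Even.neg_one_zpow
      have : (⌈τ⌉ + ((N : ℤ) - ⌈τ⌉)) = (N : ℤ) := by ring
      rw [this]; exact hNeven
    refine ⟨?_, ?_, ?_⟩
    · rw [A1]; have := hsq (⌈τ⌉ : ℤ); nlinarith [this]
    · rw [A2]; have := hsq ((N : ℤ) - ⌈τ⌉); nlinarith [this]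
    · rw [A1, A2]
      calc (-1 : ℝ) ^ (⌈τ⌉ : ℤ) * -(Amp N τ (⌈τ⌉ : ℝ) sI1 k) *
            ((-1 : ℝ) ^ ((N : ℤ) - ⌈τ⌉) * -(Amp N τ ((N : ℝ) - (⌈τ⌉ : ℝ)) sI2 k))
          = ((-1 : ℝ) ^ (⌈τ⌉ : ℤ) * (-1 : ℝ) ^ ((N : ℤ) - ⌈τ⌉)) *
            (Amp N τ (⌈τ⌉ : ℝ) sI1 k * Amp N τ ((N : ℝ) - (⌈τ⌉ : ℝ)) sI2 k) := by ring
        _ = _ := by rw [hprodsign, one_mul]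
end

section
/- Let N be a power of two, τ ∈ [0, N), L = ⌊τ⌋, λ = τ - L, and s_{I1} ≥ s_{I2} in {0,...,N-1}. Define the phase difference Δ(k, s_{I1}, s_{I2}) = (π/N)[(λ - L)N + (s_{I1} - s_{I2})(τ - ⌈τ⌉ + 1) + N(s_{I2} - k)]. Then for any δ with s_{I1} + δ < N and s_{I2} + δ < N, and k' = [k + δ] mod N, cos(Δ(k', s_{I1}+δ, s_{I2}+δ)) = cos(Δ(k, s_{I1}, s_{I2})). -/
open Real

theorem interference_phase_shift_invariance
    (SF N : ℕ) (hN : N = 2 ^ SF) (hSF : 1 ≤ SF)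
    (τ : ℝ) (hτ0 : 0 ≤ τ) (hτN : τ < N)
    (L : ℤ) (hL : L = ⌊τ⌋) (lam : ℝ) (hlam : lam = τ - L)
    (sI1 sI2 k : ℕ) (hs1 : sI1 < N) (hs2 : sI2 < N) (hk : k < N) (hs12 : sI2 ≤ sI1)
    (δ : ℕ) (hδ1 : sI1 + δ < N) (hδ2 : sI2 + δ < N)
    (k' : ℕ) (hk' : k' = (k + δ) % N)
    (Δ : ℝ → ℝ → ℝ → ℝ)
    (hΔ : ∀ k₀ s₁ s₂ : ℝ, Δ k₀ s₁ s₂ = (Real.pi / N) *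
      ((lam - L) * N + (s₁ - s₂) * (τ - (⌈τ⌉ : ℝ) + 1) + N * (s₂ - k₀))) :
    Real.cos (Δ (k' : ℝ) ((sI1 + δ : ℕ) : ℝ) ((sI2 + δ : ℕ) : ℝ))
      = Real.cos (Δ (k : ℝ) (sI1 : ℝ) (sI2 : ℝ)) := by
  have hNpos : 0 < N := by rw [hN]; positivity
  have hN0 : (N : ℝ) ≠ 0 := by positivity
  -- N is even: N = 2 * M
  obtain ⟨M, hM⟩ : ∃ M : ℕ, N = 2 * M := ⟨2 ^ (SF - 1), by
    rw [hN, ← pow_succ']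
    congr 1
    omega⟩
  set q : ℕ := (k + δ) / N with hq
  have hdiv : k + δ = N * q + k' := by
    rw [hk', hq]
    exact (Nat.div_add_mod (k + δ) N).symm
  have hk'' : (k' : ℝ) = (k : ℝ) + δ - N * q := by
    have : ((k + δ : ℕ) : ℝ) = ((N * q + k' : ℕ) : ℝ) := by rw [hdiv]
    push_cast at this ⊢
    linarith
  rw [hΔ, hΔ]
  have key : (Real.pi / N) *
      ((lam - L) * N + (((sI1 + δ : ℕ) : ℝ) - ((sI2 + δ : ℕ) : ℝ)) * (τ - (⌈τ⌉ : ℝ) + 1)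
        + N * (((sI2 + δ : ℕ) : ℝ) - (k' : ℝ)))
      = (Real.pi / N) *
      ((lam - L) * N + ((sI1 : ℝ) - (sI2 : ℝ)) * (τ - (⌈τ⌉ : ℝ) + 1)
        + N * ((sI2 : ℝ) - (k : ℝ))) + ((M * q : ℕ) : ℤ) * (2 * Real.pi) := by
    have hM' : (N : ℝ) = 2 * M := by exact_mod_cast hM
    have hM0 : (M : ℝ) ≠ 0 := by
      have : 0 < M := by omega
      positivity
    rw [hk'']
    push_cast
    rw [hM']
    field_simp
    ring
  rw [key, Real.cos_add_int_mul_two_pi]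
end

section
/- Let N be a power of two, τ ∈ [0, N-1) non-integer, τ' = (N-1) - τ, and s_{I1}, s_{I2}, k ∈ {0,...,N-1}. With A_{k,1}(s,τ) = sin(π(s-k-τ)⌈τ⌉/N)/sin(π(s-k-τ)/N) and A_{k,2}(s,τ) = sin(π(s-k-τ)(N-⌈τ⌉)/N)/sin(π(s-k-τ)/N), set k' = -k-(N-1)+[s_{I1}+s_{I2}] mod N (taken mod N). Then A_{k',1}(s_{I1},τ')² = A_{k,2}(s_{I2},τ)², A_{k',2}(s_{I2},τ')² = A_{k,1}(s_{I1},τ)², and A_{k',1}(s_{I1},τ')·A_{k',2}(s_{I2},τ') = A_{k,1}(s_{I1},τ)·A_{k,2}(s_{I2},τ). -/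
open Real

/-- Interference amplitude factor `A_{k,1}(s,τ) = sin(π(s-k-τ)⌈τ⌉/N)/sin(π(s-k-τ)/N)`. -/
noncomputable def A1 (N : ℕ) (τ s k : ℝ) : ℝ :=
  Real.sin (Real.pi * (s - k - τ) * (⌈τ⌉ : ℝ) / N) / Real.sin (Real.pi * (s - k - τ) / N)

/-- Interference amplitude factor `A_{k,2}(s,τ) = sin(π(s-k-τ)(N-⌈τ⌉)/N)/sin(π(s-k-τ)/N)`. -/
noncomputable def A2 (N : ℕ) (τ s k : ℝ) : ℝ :=
  Real.sin (Real.pi * (s - k - τ) * ((N : ℝ) - (⌈τ⌉ : ℝ)) / N) /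
    Real.sin (Real.pi * (s - k - τ) / N)

lemma ratio_shift (N : ℕ) (hN : (N:ℝ) ≠ 0) (c m : ℤ) (v : ℝ) :
    Real.sin (Real.pi * (-v + m*N) * (c:ℝ) / N) / Real.sin (Real.pi * (-v + m*N) / N)
    = (-1:ℝ)^(m*(c-1)) *
      (Real.sin (Real.pi * v * (c:ℝ) / N) / Real.sin (Real.pi * v / N)) := by
  have h1 : Real.pi * (-v + m*N) * (c:ℝ) / N = -(Real.pi * v * (c:ℝ) / N) + (m*c : ℤ) * Real.pi := by
    push_cast; field_simp
  have h2 : Real.pi * (-v + m*N) / N = -(Real.pi * v / N) + (m:ℤ) * Real.pi := by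
    field_simp
  rw [h1, h2, Real.sin_add_int_mul_pi, Real.sin_add_int_mul_pi, Real.sin_neg, Real.sin_neg]
  rw [mul_neg, mul_neg, neg_div_neg_eq, mul_div_mul_comm,
    ← zpow_sub₀ (by norm_num : (-1:ℝ) ≠ 0)]
  congr 2
  ring

lemma neg_one_zpow_sq (e : ℤ) : ((-1:ℝ)^e)^2 = 1 := by
  rcases Int.even_or_odd e with h | h
  · rw [h.neg_one_zpow]; norm_num
  · rw [h.neg_one_zpow]; norm_num

theorem interference_amplitude_reflection
    (SF N : ℕ) (hN : N = 2 ^ SF) (hSF : 1 ≤ SF)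
    (τ : ℝ) (hτ0 : 0 ≤ τ) (hτN : τ < (N : ℝ) - 1) (hτnotint : ∀ z : ℤ, τ ≠ (z : ℝ))
    (τ' : ℝ) (hτ' : τ' = ((N : ℝ) - 1) - τ)
    (sI1 sI2 k : ℕ) (hs1 : sI1 < N) (hs2 : sI2 < N) (hk : k < N)
    (k' : ℤ) (hk' : k' = (-(k : ℤ) - ((N : ℤ) - 1) + (((sI1 : ℤ) + sI2) % N)) % N) :
    (A1 N τ' (sI1 : ℝ) (k' : ℝ)) ^ 2 = (A2 N τ (sI2 : ℝ) (k : ℝ)) ^ 2 ∧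
    (A2 N τ' (sI2 : ℝ) (k' : ℝ)) ^ 2 = (A1 N τ (sI1 : ℝ) (k : ℝ)) ^ 2 ∧
    A1 N τ' (sI1 : ℝ) (k' : ℝ) * A2 N τ' (sI2 : ℝ) (k' : ℝ)
      = A1 N τ (sI1 : ℝ) (k : ℝ) * A2 N τ (sI2 : ℝ) (k : ℝ) := by
  have hNpos : 0 < N := by rw [hN]; exact pow_pos (by norm_num) SF
  have hNr : (N:ℝ) ≠ 0 := Nat.cast_ne_zero.mpr hNpos.ne'
  have hNeven : Even (N:ℤ) := by
    refine ⟨2^(SF-1), ?_⟩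
    have : N = 2^(SF-1) + 2^(SF-1) := by
      rw [hN, ← two_mul, ← pow_succ']
      congr 1
      omega
    exact_mod_cast this
  set c : ℤ := ⌈τ⌉ with hc
  -- ceiling of τ' :
  have hfloorlt : (⌊τ⌋ : ℝ) < τ :=
    lt_of_le_of_ne (Int.floor_le τ) fun h => hτnotint ⌊τ⌋ h.symm
  have hceilτ : c = ⌊τ⌋ + 1 := by
    rw [hc, Int.ceil_eq_iff] <;> push_cast
    · exact ⟨by linarith, by linarith [(Int.lt_floor_add_one τ)]⟩
  have hceil' : (⌈τ'⌉ : ℤ) = (N:ℤ) - c := by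
    have : τ' = -τ + (((N:ℤ) - 1 : ℤ) : ℝ) := by rw [hτ']; push_cast; ring
    rw [this, Int.ceil_add_intCast, Int.ceil_neg, hceilτ]
    ring
  -- the integer m
  have hmod : k' ≡ -(k:ℤ) - ((N:ℤ) - 1) + ((sI1:ℤ) + sI2) [ZMOD (N:ℤ)] := by
    rw [hk']
    calc (-(k:ℤ) - ((N:ℤ) - 1) + (((sI1:ℤ) + sI2) % N)) % N
        ≡ -(k:ℤ) - ((N:ℤ) - 1) + (((sI1:ℤ) + sI2) % N) [ZMOD (N:ℤ)] := Int.emod_emod_of_dvd _ dvd_rfl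
      _ ≡ -(k:ℤ) - ((N:ℤ) - 1) + ((sI1:ℤ) + sI2) [ZMOD (N:ℤ)] :=
          Int.ModEq.add_left _ (Int.emod_emod_of_dvd _ dvd_rfl)
  obtain ⟨m, hm⟩ : ∃ m : ℤ, (sI1:ℤ) + sI2 - k - ((N:ℤ)-1) - k' = N * m := by
    have := (Int.ModEq.symm hmod).dvd
    obtain ⟨m, hm⟩ := this
    exact ⟨-m, by linarith⟩
  have hmR : ((sI1:ℝ) + sI2 - k - ((N:ℝ)-1) - k') = N * m := by
    have := congrArg (Int.cast : ℤ → ℝ) hm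
    push_cast at this
    linarith
  -- the two shifted arguments
  have hu1 : (sI1:ℝ) - (k':ℝ) - τ' = -((sI2:ℝ) - k - τ) + m * (N:ℝ) := by
    rw [hτ']; linarith
  have hu2 : (sI2:ℝ) - (k':ℝ) - τ' = -((sI1:ℝ) - k - τ) + m * (N:ℝ) := by
    rw [hτ']; linarith
  -- main equalities with signs
  have e1 : A1 N τ' (sI1 : ℝ) (k' : ℝ)
      = (-1:ℝ)^(m*(((N:ℤ) - c) - 1)) * A2 N τ (sI2:ℝ) (k:ℝ) := by
    unfold A1 A2
    rw [hu1]
    have hcast : ((⌈τ'⌉:ℤ):ℝ) = (((N:ℤ) - c : ℤ) : ℝ) := congrArg (fun z : ℤ => (z:ℝ)) hceil'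
    rw [hcast, ratio_shift N hNr ((N:ℤ) - c) m]
    push_cast
    rw [← hc]
  have e2 : A2 N τ' (sI2 : ℝ) (k' : ℝ)
      = (-1:ℝ)^(m*(c - 1)) * A1 N τ (sI1:ℝ) (k:ℝ) := by
    unfold A1 A2
    rw [hu2]
    have hcast : (N:ℝ) - ((⌈τ'⌉:ℤ):ℝ) = ((c:ℤ):ℝ) := by
      have := congrArg (Int.cast : ℤ → ℝ) hceil'
      push_cast at this ⊢
      linarith
    rw [hcast, ratio_shift N hNr c m]
  -- the signs agree
  have hsigneq : (-1:ℝ)^(m*(((N:ℤ) - c) - 1)) = (-1:ℝ)^(m*(c - 1)) := by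
    have hd : m*(((N:ℤ) - c) - 1) = m*(c-1) + m*((N:ℤ) - 2*c) := by ring
    have heven : Even (m*((N:ℤ) - 2*c)) := by
      have : Even ((N:ℤ) - 2*c) := by
        obtain ⟨t, ht⟩ := hNeven
        exact ⟨t - c, by omega⟩
      exact this.mul_left m
    rw [hd, zpow_add₀ (by norm_num : (-1:ℝ) ≠ 0), heven.neg_one_zpow, mul_one]
  refine ⟨?_, ?_, ?_⟩
  · rw [e1, mul_pow, neg_one_zpow_sq, one_mul]
  · rw [e2, mul_pow, neg_one_zpow_sq, one_mul]
  · rw [e1, e2, hsigneq]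
    have : (-1:ℝ)^(m*(c - 1)) * A2 N τ (sI2:ℝ) (k:ℝ) * ((-1:ℝ)^(m*(c - 1)) * A1 N τ (sI1:ℝ) (k:ℝ))
        = ((-1:ℝ)^(m*(c - 1)))^2 * (A1 N τ (sI1:ℝ) (k:ℝ) * A2 N τ (sI2:ℝ) (k:ℝ)) := by ring
    rw [this, neg_one_zpow_sq, one_mul]
end
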